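/- Let F, c₁ > 0, V₁ ≥ 0, and let η ∈ C²([0,T)), η > 0, solve η'' = G(η,η') with η(0) = η₀, η'(0) = η₁, where G satisfies: (a) G(β,γ) ≤ c₁/β³ − F for all β > 0, γ ≥ 0; (b) G(β,γ) = −F for γ ≥ V₁; (c) G(β,γ) ≥ −F always. Set V₂ = max{η₁+1, V₁}, D₁ = (c₁/F)^{1/3}, and D₂ = 2·max{η₀, D₁, (½η₁² + Fη₀ + c₁/(2η₀²))/F, (½V₂² + FD₁ + c₁/(2D₁²))/F}. Then η(t) < D₂ for all t ∈ [0,T). -/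

import Mathlib

open Set Filter Topology

private lemma div_nonneg_of_nonpos_of_nonpos' {a b : ℝ} (ha : a ≤ 0) (hb : b ≤ 0) :
    0 ≤ a / b := by
  rw [← neg_div_neg_eq]
  exact div_nonneg (by linarith) (by linarith)

private lemma slope_deriv_nonneg' (f : ℝ → ℝ) (f' x : ℝ) (hf : HasDerivAt f f' x)
    (s : Set ℝ) (hx : x ∈ closure (s \ {x}))
    (hs : ∀ y ∈ s, y ≠ x → 0 ≤ (f y - f x) / (y - x)) : 0 ≤ f' := by
  have h1 : Tendsto (slope f x) (𝓝[≠] x) (𝓝 f') := hasDerivAt_iff_tendsto_slope.mp hf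
  have hne : (𝓝[s \ {x}] x).NeBot := mem_closure_iff_nhdsWithin_neBot.mp hx
  have h2 : Tendsto (slope f x) (𝓝[s \ {x}] x) (𝓝 f') :=
    h1.mono_left (nhdsWithin_mono x (fun y hy => hy.2))
  refine ge_of_tendsto h2 ?_
  filter_upwards [self_mem_nhdsWithin] with y hy
  rw [slope_def_field]
  exact hs y hy.1 hy.2

private lemma antitone_of_hasDeriv' (f f' : ℝ → ℝ) (a b : ℝ)
    (hd : ∀ x ∈ Icc a b, HasDerivAt f (f' x) x) (hle : ∀ x ∈ Ioo a b, f' x ≤ 0) :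
    AntitoneOn f (Icc a b) := by
  apply antitoneOn_of_deriv_nonpos (convex_Icc a b)
  · exact fun x hx => (hd x hx).continuousAt.continuousWithinAt
  · intro x hx
    rw [interior_Icc] at hx
    exact ((hd x (Ioo_subset_Icc_self hx)).differentiableAt).differentiableWithinAt
  · intro x hx
    rw [interior_Icc] at hx
    rw [(hd x (Ioo_subset_Icc_self hx)).deriv]
    exact hle x hx

private lemma strictAnti_of_hasDeriv' (f f' : ℝ → ℝ) (a b : ℝ)
    (hd : ∀ x ∈ Icc a b, HasDerivAt f (f' x) x) (hlt : ∀ x ∈ Ioo a b, f' x < 0) :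
    StrictAntiOn f (Icc a b) := by
  apply strictAntiOn_of_deriv_neg (convex_Icc a b)
  · exact fun x hx => (hd x hx).continuousAt.continuousWithinAt
  · intro x hx
    rw [interior_Icc] at hx
    rw [(hd x (Ioo_subset_Icc_self hx)).deriv]
    exact hlt x hx

private lemma tendsto_within_le' (f : ℝ → ℝ) (x c : ℝ) (hf : ContinuousAt f x)
    (s : Set ℝ) (hx : x ∈ closure s) (hs : ∀ y ∈ s, f y ≤ c) : f x ≤ c := by
  have hne : (𝓝[s] x).NeBot := mem_closure_iff_nhdsWithin_neBot.mp hx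
  have h2 : Tendsto f (𝓝[s] x) (𝓝 (f x)) := hf.continuousWithinAt.tendsto
  exact le_of_tendsto h2 (eventually_nhdsWithin_of_forall hs)

private lemma tendsto_within_ge' (f : ℝ → ℝ) (x c : ℝ) (hf : ContinuousAt f x)
    (s : Set ℝ) (hx : x ∈ closure s) (hs : ∀ y ∈ s, c ≤ f y) : c ≤ f x := by
  have h := tendsto_within_le' (fun u => -f u) x (-c) hf.neg s hx (fun y hy => by
    simpa using hs y hy)
  simpa using h

set_option maxHeartbeats 1000000 in
theorem stmt10
    (T F c₁ V₁ η₀ η₁ V₂ D₁ D₂ : ℝ)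
    (hT : 0 < T) (hF : 0 < F) (hc₁ : 0 < c₁) (hV₁ : 0 ≤ V₁) (hη₀ : 0 < η₀)
    (G : ℝ → ℝ → ℝ)
    (hGa : ∀ β γ : ℝ, 0 < β → 0 ≤ γ → G β γ ≤ c₁ / β ^ 3 - F)
    (hGb : ∀ β γ : ℝ, 0 < β → V₁ ≤ γ → G β γ = -F)
    (hGc : ∀ β γ : ℝ, 0 < β → -F ≤ G β γ)
    (η η' η'' : ℝ → ℝ)
    (hd1 : ∀ t ∈ Ico 0 T, HasDerivAt η (η' t) t)
    (hd2 : ∀ t ∈ Ico 0 T, HasDerivAt η' (η'' t) t)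
    (hpos : ∀ t ∈ Ico 0 T, 0 < η t)
    (hode : ∀ t ∈ Ico 0 T, η'' t = G (η t) (η' t))
    (hinit : η 0 = η₀) (hinit' : η' 0 = η₁)
    (hV₂ : V₂ = max (η₁ + 1) V₁)
    (hD₁ : D₁ = (c₁ / F) ^ ((1 : ℝ) / 3))
    (hD₂ : D₂ = 2 * max (max η₀ D₁)
      (max ((η₁ ^ 2 / 2 + F * η₀ + c₁ / (2 * η₀ ^ 2)) / F)
           ((V₂ ^ 2 / 2 + F * D₁ + c₁ / (2 * D₁ ^ 2)) / F))) :
    ∀ t ∈ Ico 0 T, η t < D₂ := by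
  have hcfpos : (0:ℝ) < c₁ / F := div_pos hc₁ hF
  have hD₁pos : 0 < D₁ := hD₁ ▸ Real.rpow_pos_of_pos hcfpos _
  have hD₁cube : D₁ ^ (3:ℕ) = c₁ / F := by
    rw [hD₁, ← Real.rpow_natCast ((c₁/F) ^ ((1:ℝ)/3)) 3, ← Real.rpow_mul hcfpos.le]
    norm_num
  set E₀ : ℝ := η₁ ^ 2 / 2 + F * η₀ + c₁ / (2 * η₀ ^ 2) with hE₀def
  set Eb : ℝ := V₂ ^ 2 / 2 + F * D₁ + c₁ / (2 * D₁ ^ 2) with hEbdef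
  set M : ℝ := max (max η₀ D₁) (max (E₀ / F) (Eb / F)) with hMdef
  have hD₂M : D₂ = 2 * M := hD₂
  have hMη₀ : η₀ ≤ M := le_trans (le_max_left _ _) (le_max_left _ _)
  have hMD₁ : D₁ ≤ M := le_trans (le_max_right _ _) (le_max_left _ _)
  have hME₀ : E₀ / F ≤ M := le_trans (le_max_left _ _) (le_max_right _ _)
  have hMEb : Eb / F ≤ M := le_trans (le_max_right _ _) (le_max_right _ _)
  have hE₀M : E₀ ≤ M * F := (div_le_iff₀ hF).mp hME₀
  have hEbM : Eb ≤ M * F := (div_le_iff₀ hF).mp hMEb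
  have hE₀pos : 0 < E₀ := by
    have h1 : 0 < F * η₀ := mul_pos hF hη₀
    have h2 : 0 < c₁ / (2 * η₀ ^ 2) := div_pos hc₁ (by positivity)
    have h3 : 0 ≤ η₁ ^ 2 / 2 := by positivity
    rw [hE₀def]; linarith
  have hEbpos : 0 < Eb := by
    have h1 : 0 < F * D₁ := mul_pos hF hD₁pos
    have h2 : 0 < c₁ / (2 * D₁ ^ 2) := div_pos hc₁ (by positivity)
    have h3 : 0 ≤ V₂ ^ 2 / 2 := by positivity
    rw [hEbdef]; linarith
  have hη₀D₂ : η₀ < D₂ := by rw [hD₂M]; linarith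
  have hD₁D₂ : D₁ < D₂ := by rw [hD₂M]; linarith
  have hη₁V₂ : η₁ < V₂ := lt_of_lt_of_le (lt_add_one η₁) (hV₂ ▸ le_max_left _ _)
  have hV₁V₂ : V₁ ≤ V₂ := hV₂ ▸ le_max_right _ _
  -- velocity bound
  have hvel : ∀ u ∈ Ico 0 T, η' u < V₂ := by
    intro t ht
    by_contra hcon
    push_neg at hcon
    set S : Set ℝ := {u | u ∈ Icc 0 t ∧ η' u < V₂} with hSdef
    have h0S : (0:ℝ) ∈ S := ⟨⟨le_refl 0, ht.1⟩, by rw [hinit']; exact hη₁V₂⟩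
    have hSne : S.Nonempty := ⟨0, h0S⟩
    have hSbdd : BddAbove S := ⟨t, fun u hu => hu.1.2⟩
    set s₁ : ℝ := sSup S with hs₁def
    have hs₁0 : 0 ≤ s₁ := le_csSup hSbdd h0S
    have hs₁t : s₁ ≤ t := csSup_le hSne (fun u hu => hu.1.2)
    have hs₁mem : s₁ ∈ Ico 0 T := ⟨hs₁0, lt_of_le_of_lt hs₁t ht.2⟩
    have hnotS : ∀ u, s₁ < u → u ∉ S := fun u hu hmem =>
      absurd (le_csSup hSbdd hmem) (not_le.mpr hu)
    have hge : ∀ u ∈ Ioc s₁ t, V₂ ≤ η' u := by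
      intro u hu
      by_contra hq
      push_neg at hq
      exact hnotS u hu.1 ⟨⟨le_trans hs₁0 hu.1.le, hu.2⟩, hq⟩
    have hub : η' s₁ ≤ V₂ := by
      refine tendsto_within_le' η' s₁ V₂ (hd2 s₁ hs₁mem).continuousAt S
        (csSup_mem_closure hSne hSbdd) (fun y hy => hy.2.le)
    rcases eq_or_lt_of_le hub with heq | hlt
    · -- η' s₁ = V₂ : accumulation argument
      have hs₁S : s₁ ∉ S := fun h => absurd heq (ne_of_lt h.2)
      have hclos : s₁ ∈ closure (S \ {s₁}) := by
        rw [Set.diff_singleton_eq_self hs₁S]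
        exact csSup_mem_closure hSne hSbdd
      have hslope : 0 ≤ η'' s₁ := by
        refine slope_deriv_nonneg' η' (η'' s₁) s₁ (hd2 s₁ hs₁mem) S hclos ?_
        intro y hy hne
        have hylt : y < s₁ := lt_of_le_of_ne (le_csSup hSbdd hy) hne
        have hnum : η' y - η' s₁ ≤ 0 := by rw [heq]; linarith [hy.2]
        exact div_nonneg_of_nonpos_of_nonpos' hnum (by linarith)
      have hF' : η'' s₁ = -F := by
        rw [hode s₁ hs₁mem]
        exact hGb _ _ (hpos s₁ hs₁mem) (heq ▸ hV₁V₂)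
      linarith [hslope, hF'.symm ▸ hslope]
    · -- η' s₁ < V₂ : strict decrease on [s₁, t]
      have hs₁lt : s₁ < t := by
        rcases eq_or_lt_of_le hs₁t with h | h
        · exfalso; rw [h] at hlt; exact absurd hcon (not_le.mpr hlt)
        · exact h
      have hd : ∀ x ∈ Icc s₁ t, HasDerivAt η' (η'' x) x :=
        fun x hx => hd2 x ⟨le_trans hs₁0 hx.1, lt_of_le_of_lt hx.2 ht.2⟩
      have hlt' : ∀ x ∈ Ioo s₁ t, η'' x < 0 := by
        intro x hx
        have hxmem : x ∈ Ico 0 T := ⟨le_trans hs₁0 hx.1.le, lt_trans hx.2 ht.2⟩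
        have : η'' x = -F := by
          rw [hode x hxmem]
          exact hGb _ _ (hpos x hxmem) (le_trans hV₁V₂ (hge x ⟨hx.1, hx.2.le⟩))
        rw [this]; linarith
      have := strictAnti_of_hasDeriv' η' η'' s₁ t hd hlt'
        (left_mem_Icc.mpr hs₁lt.le) (right_mem_Icc.mpr hs₁lt.le) hs₁lt
      linarith [hcon]
  -- energy function
  set En : ℝ → ℝ := fun u => η' u * η' u / 2 + F * η u + c₁ / (2 * (η u * η u)) with hEn
  have hEd : ∀ u ∈ Ico 0 T,
      HasDerivAt En (η' u * (η'' u + F - c₁ / (η u) ^ 3)) u := by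
    intro u hu
    have hηu : 0 < η u := hpos u hu
    have h1 : HasDerivAt (fun v => η' v * η' v / 2) (η' u * η'' u) u := by
      have := ((hd2 u hu).mul (hd2 u hu)).div_const 2
      refine this.congr_deriv ?_
      ring
    have h2 : HasDerivAt (fun v => F * η v) (F * η' u) u := (hd1 u hu).const_mul F
    have hgne : 2 * (η u * η u) ≠ 0 := ne_of_gt (mul_pos two_pos (mul_pos hηu hηu))
    have h3 : HasDerivAt (fun v => c₁ / (2 * (η v * η v)))
        ((0 * (2 * (η u * η u)) - c₁ * (2 * (η' u * η u + η u * η' u))) /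
          (2 * (η u * η u)) ^ 2) u := by
      exact (hasDerivAt_const u c₁).div (((hd1 u hu).mul (hd1 u hu)).const_mul 2) hgne
    have := (h1.add h2).add h3
    refine this.congr_deriv ?_
    field_simp
    ring
  have hEanti : ∀ a b : ℝ, 0 ≤ a → a ≤ b → b < T →
      (∀ u ∈ Icc a b, 0 ≤ η' u) → En b ≤ En a := by
    intro a b ha hab hbT hnn
    have hsub : ∀ x ∈ Icc a b, x ∈ Ico 0 T :=
      fun x hx => ⟨le_trans ha hx.1, lt_of_le_of_lt hx.2 hbT⟩
    refine antitone_of_hasDeriv' En (fun u => η' u * (η'' u + F - c₁ / (η u) ^ 3)) a b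
      (fun x hx => hEd x (hsub x hx)) ?_ (left_mem_Icc.mpr hab) (right_mem_Icc.mpr hab) hab
    intro x hx
    have hxm := hsub x (Ioo_subset_Icc_self hx)
    have hηx := hpos x hxm
    have hη'x : 0 ≤ η' x := hnn x (Ioo_subset_Icc_self hx)
    have hG : η'' x ≤ c₁ / (η x) ^ 3 - F := by
      rw [hode x hxm]; exact hGa _ _ hηx hη'x
    exact mul_nonpos_of_nonneg_of_nonpos hη'x (by linarith)
  have hEge : ∀ u ∈ Ico 0 T, F * η u ≤ En u := by
    intro u hu
    have hηu := hpos u hu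
    have h1 : 0 < c₁ / (2 * (η u * η u)) :=
      div_pos hc₁ (mul_pos two_pos (mul_pos hηu hηu))
    have h2 : 0 ≤ η' u * η' u / 2 := div_nonneg (mul_self_nonneg _) (by norm_num)
    simp only [hEn]; linarith
  -- main argument
  intro t ht
  by_contra hcon
  push_neg at hcon
  -- first time η reaches D₂
  have hcont : ContinuousOn η (Icc 0 t) := fun x hx =>
    (hd1 x ⟨hx.1, lt_of_le_of_lt hx.2 ht.2⟩).continuousAt.continuousWithinAt
  set S : Set ℝ := Icc 0 t ∩ η ⁻¹' (Ici D₂) with hSdef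
  have hSclosed : IsClosed S := hcont.preimage_isClosed_of_isClosed isClosed_Icc isClosed_Ici
  have hSne : S.Nonempty := ⟨t, ⟨⟨ht.1, le_refl t⟩, hcon⟩⟩
  have hSbdd : BddBelow S := ⟨0, fun u hu => hu.1.1⟩
  set t₀ : ℝ := sInf S with ht₀def
  have ht₀S : t₀ ∈ S := hSclosed.csInf_mem hSne hSbdd
  have ht₀0 : 0 ≤ t₀ := ht₀S.1.1
  have ht₀t : t₀ ≤ t := ht₀S.1.2
  have ht₀mem : t₀ ∈ Ico 0 T := ⟨ht₀0, lt_of_le_of_lt ht₀t ht.2⟩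
  have hηt₀ : D₂ ≤ η t₀ := ht₀S.2
  have hbefore : ∀ u, 0 ≤ u → u < t₀ → η u < D₂ := by
    intro u hu0 hut₀
    by_contra hq
    push_neg at hq
    have : u ∈ S := ⟨⟨hu0, le_trans hut₀.le ht₀t⟩, hq⟩
    exact absurd (csInf_le hSbdd this) (not_le.mpr hut₀)
  have ht₀pos : 0 < t₀ := by
    rcases eq_or_lt_of_le ht₀0 with h | h
    · exfalso; rw [← h, hinit] at hηt₀; linarith
    · exact h
  -- η' t₀ ≥ 0
  have hη't₀ : 0 ≤ η' t₀ := by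
    refine slope_deriv_nonneg' η (η' t₀) t₀ (hd1 t₀ ht₀mem) (Ico 0 t₀) ?_ ?_
    · rw [Set.diff_singleton_eq_self (by simp), closure_Ico (ne_of_lt ht₀pos)]
      exact right_mem_Icc.mpr ht₀0
    · intro y hy _
      have h1 : η y - η t₀ ≤ 0 := by linarith [hbefore y hy.1 hy.2]
      exact div_nonneg_of_nonpos_of_nonpos' h1 (by linarith [hy.2])
  by_cases hcaseA : ∀ u ∈ Icc 0 t₀, 0 ≤ η' u
  · -- case A: η' ≥ 0 on [0, t₀]
    have h1 : En t₀ ≤ En 0 := hEanti 0 t₀ le_rfl ht₀0 ht₀mem.2 hcaseA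
    have h2 : En 0 = E₀ := by simp only [hEn, hinit, hinit', hE₀def]; ring
    have h3 : F * η t₀ ≤ En t₀ := hEge t₀ ht₀mem
    have h4 : F * D₂ ≤ F * η t₀ := mul_le_mul_of_nonneg_left hηt₀ hF.le
    rw [hD₂M] at h4
    linarith
  · push_neg at hcaseA
    obtain ⟨w, hw, hw'⟩ := hcaseA
    set O : Set ℝ := {u | u ∈ Icc 0 t₀ ∧ η' u < 0} with hOdef
    have hOne : O.Nonempty := ⟨w, hw, by linarith⟩
    have hObdd : BddAbove O := ⟨t₀, fun u hu => hu.1.2⟩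
    set s₀ : ℝ := sSup O with hs₀def
    have hs₀0 : 0 ≤ s₀ := le_trans hw.1 (le_csSup hObdd ⟨hw, by linarith⟩)
    have hs₀t₀ : s₀ ≤ t₀ := csSup_le hOne (fun u hu => hu.1.2)
    have hs₀mem : s₀ ∈ Ico 0 T := ⟨hs₀0, lt_of_le_of_lt hs₀t₀ ht₀mem.2⟩
    have hnotO : ∀ u, s₀ < u → u ∉ O := fun u hu hmem =>
      absurd (le_csSup hObdd hmem) (not_le.mpr hu)
    have hafter : ∀ u ∈ Ioc s₀ t₀, 0 ≤ η' u := by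
      intro u hu
      by_contra hq
      push_neg at hq
      exact hnotO u hu.1 ⟨⟨le_trans hs₀0 hu.1.le, hu.2⟩, hq⟩
    have hle0 : η' s₀ ≤ 0 :=
      tendsto_within_le' η' s₀ 0 (hd2 s₀ hs₀mem).continuousAt O
        (csSup_mem_closure hOne hObdd) (fun y hy => hy.2.le)
    have hge0 : 0 ≤ η' s₀ := by
      rcases eq_or_lt_of_le hs₀t₀ with h | h
      · rw [h]; exact hη't₀
      · refine tendsto_within_ge' η' s₀ 0 (hd2 s₀ hs₀mem).continuousAt (Ioc s₀ t₀) ?_ hafter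
        rw [closure_Ioc (ne_of_lt h)]
        exact left_mem_Icc.mpr hs₀t₀
    have hs₀zero : η' s₀ = 0 := le_antisymm hle0 hge0
    -- η'' s₀ ≥ 0
    have hs₀O : s₀ ∉ O := fun h => absurd hs₀zero (ne_of_lt h.2)
    have hslope : 0 ≤ η'' s₀ := by
      refine slope_deriv_nonneg' η' (η'' s₀) s₀ (hd2 s₀ hs₀mem) O ?_ ?_
      · rw [Set.diff_singleton_eq_self hs₀O]
        exact csSup_mem_closure hOne hObdd
      · intro y hy hne
        have hylt : y < s₀ := lt_of_le_of_ne (le_csSup hObdd hy) hne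
        have hnum : η' y - η' s₀ ≤ 0 := by rw [hs₀zero]; linarith [hy.2]
        exact div_nonneg_of_nonpos_of_nonpos' hnum (by linarith)
    -- η s₀ ≤ D₁
    have hηs₀pos := hpos s₀ hs₀mem
    have hGle : η'' s₀ ≤ c₁ / (η s₀) ^ 3 - F := by
      rw [hode s₀ hs₀mem]
      exact hGa _ _ hηs₀pos (le_of_eq hs₀zero.symm)
    have hFle : F ≤ c₁ / (η s₀) ^ 3 := by linarith
    have hcube : (η s₀) ^ 3 ≤ c₁ / F := by
      rw [le_div_iff₀ hF]
      rw [le_div_iff₀ (by positivity : (0:ℝ) < (η s₀)^3)] at hFle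
      linarith
    have hηs₀D₁ : η s₀ ≤ D₁ := by
      by_contra hq
      push_neg at hq
      have : D₁ ^ 3 < (η s₀) ^ 3 := by
        apply pow_lt_pow_left₀ hq hD₁pos.le
        norm_num
      rw [hD₁cube] at this
      linarith
    -- η' ≥ 0 on [s₀, t₀]
    have hnn : ∀ u ∈ Icc s₀ t₀, 0 ≤ η' u := by
      intro u hu
      rcases eq_or_lt_of_le hu.1 with h | h
      · rw [← h]; linarith [hs₀zero]
      · exact hafter u ⟨h, hu.2⟩
    -- crossing point
    have hcont' : ContinuousOn η (Icc s₀ t₀) := fun x hx =>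
      (hd1 x ⟨le_trans hs₀0 hx.1, lt_of_le_of_lt hx.2 ht₀mem.2⟩).continuousAt.continuousWithinAt
    have hD₁mem : D₁ ∈ Icc (η s₀) (η t₀) := ⟨hηs₀D₁, by linarith⟩
    obtain ⟨s₂, hs₂mem, hs₂val⟩ := intermediate_value_Icc hs₀t₀ hcont' hD₁mem
    have hs₂Ico : s₂ ∈ Ico 0 T :=
      ⟨le_trans hs₀0 hs₂mem.1, lt_of_le_of_lt hs₂mem.2 ht₀mem.2⟩
    -- energy bound
    have hEs₂ : En s₂ ≤ Eb := by
      have hv : η' s₂ < V₂ := hvel s₂ hs₂Ico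
      have hv0 : 0 ≤ η' s₂ := hnn s₂ hs₂mem
      have hsq : η' s₂ * η' s₂ ≤ V₂ ^ 2 := by
        have := mul_le_mul hv.le hv.le hv0 (le_trans hv0 hv.le)
        calc η' s₂ * η' s₂ ≤ V₂ * V₂ := this
          _ = V₂ ^ 2 := (sq V₂).symm
      simp only [hEn, hs₂val, hEbdef]
      have : c₁ / (2 * (D₁ * D₁)) = c₁ / (2 * D₁ ^ 2) := by ring_nf
      rw [this]
      linarith
    have h1 : En t₀ ≤ En s₂ :=
      hEanti s₂ t₀ hs₂Ico.1 hs₂mem.2 ht₀mem.2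
        (fun u hu => hnn u ⟨le_trans hs₂mem.1 hu.1, hu.2⟩)
    have h3 : F * η t₀ ≤ En t₀ := hEge t₀ ht₀mem
    have h4 : F * D₂ ≤ F * η t₀ := mul_le_mul_of_nonneg_left hηt₀ hF.le
    rw [hD₂M] at h4
    linarith
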